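/- The binary Champernowne sequence c is typical, i.e. lim_{n→∞} L_n(c)/log₂ n = 1. -/

import Mathlib

open Filter

open Classical in
/-- `L_n(x)`: the maximal length of a run of consecutive ones among the first `n`
digits (positions `1,…,n`) of the binary sequence `x`. -/
noncomputable def runL (x : ℕ → Bool) (n : ℕ) : ℕ :=
  Nat.findGreatest
    (fun j => ∃ i, i + j ≤ n ∧ ∀ k, 1 ≤ k → k ≤ j → x (i + k) = true) n

/-- A binary sequence is typical if `L_n(x)/log₂ n → 1`. -/
def Typical (x : ℕ → Bool) : Prop :=
  Tendsto (fun n : ℕ => (runL x n : ℝ) / Real.logb 2 (n : ℝ)) atTop (nhds 1)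

/-- The infinite binary sequence (indexed from 1) obtained by concatenating
the nonempty blocks `b 1, b 2, b 3, …`. -/
def concatSeq (b : ℕ → List Bool) : ℕ → Bool :=
  fun i => (((List.range i).map fun k => b (k + 1)).flatten).getD (i - 1) false

/-- The binary Champernowne sequence `1 10 11 100 101 110 111 …`, the
concatenation of the binary representations (without leading zeros, most
significant bit first) of `1, 2, 3, …`. -/
def champ : ℕ → Bool :=
  concatSeq fun n => (Nat.bits n).reverse

namespace ChampAux

/-- sum of block lengths of numbers `1,…,m`. -/
def pre (m : ℕ) : ℕ := ∑ k ∈ Finset.range m, Nat.size (k + 1)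

/-- flattened list of the first `M` blocks -/
def FL (M : ℕ) : List Bool := ((List.range M).map fun k => (Nat.bits (k + 1)).reverse).flatten

lemma FL_succ (M : ℕ) : FL (M + 1) = FL M ++ (Nat.bits (M + 1)).reverse := by
  simp [FL, List.range_succ]

lemma FL_length (M : ℕ) : (FL M).length = pre M := by
  induction M with
  | zero => simp [FL, pre]
  | succ M ih => simp [FL_succ, pre, Finset.sum_range_succ, ih, Nat.size_eq_bits_len]
    

lemma pre_succ (M : ℕ) : pre (M + 1) = pre M + Nat.size (M + 1) :=
  Finset.sum_range_succ _ M

lemma le_pre (M : ℕ) : M ≤ pre M := by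
  induction M with
  | zero => simp [pre]
  | succ M ih =>
    have : 1 ≤ Nat.size (M + 1) := Nat.size_pos.mpr (Nat.succ_pos M)
    rw [pre_succ]; omega

lemma FL_prefix {M M' : ℕ} (h : M ≤ M') : ∃ t, FL M' = FL M ++ t := by
  induction M' with
  | zero => exact ⟨[], by simp [show M = 0 by omega]⟩
  | succ M' ih =>
    rcases Nat.eq_or_lt_of_le h with h' | h'
    · exact ⟨[], by simp [h']⟩
    · obtain ⟨t, ht⟩ := ih (by omega)
      exact ⟨t ++ (Nat.bits (M' + 1)).reverse, by rw [FL_succ, ht, List.append_assoc]⟩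

/-- the `(j+1)`-st digit (`0 ≤ j < size (m+1)`) of the block of `m+1`. -/
lemma champ_eval (m j : ℕ) (hj : j < Nat.size (m + 1)) :
    champ (pre m + j + 1) = Nat.testBit (m + 1) (Nat.size (m + 1) - 1 - j) := by
  have hlen : ((Nat.bits (m + 1)).reverse).length = Nat.size (m + 1) := by
    simp [Nat.size_eq_bits_len]
  have hm1 : m + 1 ≤ pre m + j + 1 := by have := le_pre m; omega
  obtain ⟨t, ht⟩ := FL_prefix hm1
  have hchamp : champ (pre m + j + 1) = (FL (pre m + j + 1)).getD (pre m + j) false := by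
    simp [champ, concatSeq, FL]
  rw [hchamp, ht, FL_succ]
  rw [List.append_assoc]
  have hlt : pre m + j < (FL m ++ (Nat.bits (m+1)).reverse).length := by
    simp [FL_length, hlen]; omega
  rw [← List.append_assoc, List.getD_append _ _ _ _ hlt,
    List.getD_append_right _ _ _ _ (by rw [FL_length]; omega)]
  rw [FL_length]
  have hj' : pre m + j - pre m = j := by omega
  rw [hj']
  have hjr : j < ((Nat.bits (m + 1)).reverse).length := by omega
  rw [List.getD_eq_getElem _ _ hjr, List.getElem_reverse]
  rw [Nat.testBit_eq_inth]
  have hidx : (Nat.bits (m+1)).length - 1 - j < (Nat.bits (m+1)).length := by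
    rw [Nat.size_eq_bits_len] at *; omega
  rw [← Nat.size_eq_bits_len, List.getI_eq_getElem _ (by rw [Nat.size_eq_bits_len]; omega)]

/-- block decomposition of a positive position -/
lemma exists_block (p : ℕ) (hp : 1 ≤ p) :
    ∃ m j, j < Nat.size (m + 1) ∧ p = pre m + j + 1 := by
  induction p with
  | zero => omega
  | succ p ih =>
    rcases Nat.eq_or_lt_of_le hp with h1 | h1
    · exact ⟨0, 0, by simp [Nat.size_pos], by simp [pre, ← h1]⟩
    · obtain ⟨m, j, hj, hpe⟩ := ih (by omega)
      by_cases hj1 : j + 1 < Nat.size (m + 1)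
      · exact ⟨m, j + 1, hj1, by omega⟩
      · refine ⟨m + 1, 0, by simp [Nat.size_pos], ?_⟩
        have : j + 1 = Nat.size (m + 1) := by omega
        rw [pre_succ]; omega


lemma clash (b t s : ℕ) (ht : 1 ≤ t) (hs : 1 ≤ s) (hd : 2 ^ t ∣ b) (hsz : s ≤ Nat.size b)
    (htop : ∀ d < s, Nat.testBit b (Nat.size b - 1 - d) = true) : t + s ≤ Nat.size b := by
  by_contra hcon
  push_neg at hcon
  have hk := htop (s - 1) (by omega)
  have hk' : Nat.size b - 1 - (s - 1) = Nat.size b - s := by omega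
  rw [hk'] at hk
  have hlt : Nat.size b - s < t := by omega
  have hmod : b % 2 ^ t = 0 := Nat.mod_eq_zero_of_dvd hd
  have := Nat.testBit_mod_two_pow b t (Nat.size b - s)
  rw [hmod, hk, Nat.zero_testBit, decide_eq_true hlt] at this
  simp at this

/-- all bits below `size` set implies `m = 2^size - 1` -/
lemma all_ones (m : ℕ) (hall : ∀ d < Nat.size m, Nat.testBit m d = true) :
    m = 2 ^ Nat.size m - 1 := by
  apply Nat.eq_of_testBit_eq
  intro i
  rw [Nat.testBit_two_pow_sub_one]
  by_cases h : i < Nat.size m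
  · simp [hall i h, h]
  · simp only [h, decide_false]
    exact Nat.testBit_eq_false_of_lt (lt_of_lt_of_le (Nat.lt_size_self m)
      (Nat.pow_le_pow_right (by norm_num) (by omega)))

/-- low `t` bits of `m` all set implies `2^t ∣ m+1` -/
lemma low_ones (m t : ℕ) (hlow : ∀ d < t, Nat.testBit m d = true) : 2 ^ t ∣ m + 1 := by
  have hmod : m % 2 ^ t = 2 ^ t - 1 := by
    apply Nat.eq_of_testBit_eq
    intro i
    rw [Nat.testBit_mod_two_pow, Nat.testBit_two_pow_sub_one]
    by_cases h : i < t
    · simp [h, hlow i h]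
    · simp [h]
  have h1 : 1 ≤ 2 ^ t := Nat.one_le_two_pow
  have h2 := Nat.div_add_mod m (2 ^ t)
  refine ⟨m / 2 ^ t + 1, by rw [Nat.mul_add, Nat.mul_one]; omega⟩

lemma bits_pow_sub_one (m : ℕ) : Nat.bits (2 ^ m - 1) = List.replicate m true := by
  induction m with
  | zero => simp [Nat.zero_bits]
  | succ m ih =>
    have h : 2 ^ (m + 1) - 1 = 2 * (2 ^ m - 1) + 1 := by
      have : 1 ≤ 2 ^ m := Nat.one_le_two_pow
      ring_nf; omega
    rw [h, Nat.bit1_bits, ih, List.replicate_succ]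

lemma size_pow_sub_one (m : ℕ) : Nat.size (2 ^ m - 1) = m := by
  rw [← Nat.size_eq_bits_len, bits_pow_sub_one, List.length_replicate]


lemma pre_bound (m : ℕ) (hm : 1 ≤ m) : pre (2 ^ m - 2) ≤ (2 ^ m - 2) * m := by
  unfold pre
  calc ∑ k ∈ Finset.range (2 ^ m - 2), Nat.size (k + 1)
      ≤ ∑ _k ∈ Finset.range (2 ^ m - 2), m := by
        apply Finset.sum_le_sum
        intro k hk
        rw [Finset.mem_range] at hk
        have : k + 1 ≤ 2 ^ m - 1 := by omega
        calc Nat.size (k + 1) ≤ Nat.size (2 ^ m - 1) := Nat.size_le_size this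
          _ = m := size_pow_sub_one m
    _ = (2 ^ m - 2) * m := by simp [Finset.sum_const, Nat.smul_one_eq_cast]

/-- Lower bound: if `m * 2^m ≤ n` then `runL champ n ≥ m`. -/
lemma runL_lower (m n : ℕ) (hm : 1 ≤ m) (h : m * 2 ^ m ≤ n) : m ≤ runL champ n := by
  classical
  have h2m : 2 ≤ 2 ^ m := by calc 2 = 2 ^ 1 := rfl
                                 _ ≤ 2 ^ m := Nat.pow_le_pow_right (by norm_num) hm
  have hmn : m ≤ n := le_trans (Nat.le_mul_of_pos_right m (by positivity)) h
  apply Nat.le_findGreatest hmn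
  refine ⟨pre (2 ^ m - 2), ?_, ?_⟩
  · have h1 := pre_bound m hm
    calc pre (2 ^ m - 2) + m ≤ (2 ^ m - 2) * m + m := by omega
      _ = (2 ^ m - 2 + 1) * m := (Nat.succ_mul _ m).symm
      _ ≤ 2 ^ m * m := Nat.mul_le_mul_right m (by omega)
      _ = m * 2 ^ m := Nat.mul_comm _ _
      _ ≤ n := h
  · intro k hk1 hkm
    have hN : 2 ^ m - 2 + 1 = 2 ^ m - 1 := by omega
    have hsz : Nat.size (2 ^ m - 2 + 1) = m := by rw [hN, size_pow_sub_one]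
    have hjlt : k - 1 < Nat.size (2 ^ m - 2 + 1) := by omega
    have heval := champ_eval (2 ^ m - 2) (k - 1) hjlt
    have hpos : pre (2 ^ m - 2) + k = pre (2 ^ m - 2) + (k - 1) + 1 := by omega
    rw [hpos, heval, hN, size_pow_sub_one]
    rw [Nat.testBit_two_pow_sub_one]
    simp only [decide_eq_true_eq]
    omega


lemma pre_zero : pre 0 = 0 := rfl

lemma size_pos' (m : ℕ) : 1 ≤ Nat.size (m + 1) := Nat.size_pos.mpr (Nat.succ_pos m)

/-- any run of ones ending within the first `n` digits has length at most `size n` -/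
lemma run_le (n i j : ℕ) (hij : i + j ≤ n)
    (h : ∀ k, 1 ≤ k → k ≤ j → champ (i + k) = true) : j ≤ Nat.size n := by
  rcases Nat.eq_zero_or_pos j with hj0 | hj0
  · simp [hj0]
  set p := i + j with hp
  have hrun : ∀ q, i < q → q ≤ p → champ q = true := by
    intro q h1 h2
    have : q = i + (q - i) := by omega
    rw [this]
    exact h (q - i) (by omega) (by omega)
  obtain ⟨m, r, hr, hpe⟩ := exists_block p (by omega)
  by_cases hA : pre m ≤ i
  · -- run within block m+1
    have hm1n : m + 1 ≤ n := by have := le_pre m; omega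
    have : j ≤ r + 1 := by omega
    calc j ≤ Nat.size (m + 1) := by omega
      _ ≤ Nat.size n := Nat.size_le_size hm1n
  · push_neg at hA
    have hm0 : 1 ≤ m := by
      by_contra hc
      have : m = 0 := by omega
      rw [this, pre_zero] at hA; omega
    obtain ⟨m₀, rfl⟩ : ∃ m₀, m = m₀ + 1 := ⟨m - 1, by omega⟩
    have hps := pre_succ m₀
    by_cases hB : pre m₀ ≤ i
    · -- run spans blocks m₀+1 and m₀+2
      set t := pre (m₀ + 1) - i with htdef
      set s := r + 1 with hsdef
      have ht1 : 1 ≤ t := by omega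
      have hts : t ≤ Nat.size (m₀ + 1) := by omega
      have hlow : ∀ d < t, Nat.testBit (m₀ + 1) d = true := by
        intro d hd
        have hoff : Nat.size (m₀ + 1) - 1 - d < Nat.size (m₀ + 1) := by
          have := size_pos' m₀; omega
        have he := champ_eval m₀ (Nat.size (m₀ + 1) - 1 - d) hoff
        have hq : pre m₀ + (Nat.size (m₀ + 1) - 1 - d) + 1 = pre (m₀ + 1) - d := by omega
        have hidx : Nat.size (m₀ + 1) - 1 - (Nat.size (m₀ + 1) - 1 - d) = d := by omega
        rw [hq, hidx] at he
        rw [← he]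
        exact hrun _ (by omega) (by omega)
      have hdvd : 2 ^ t ∣ (m₀ + 1) + 1 := low_ones (m₀ + 1) t hlow
      have htop : ∀ d < s, Nat.testBit (m₀ + 1 + 1) (Nat.size (m₀ + 1 + 1) - 1 - d) = true := by
        intro d hd
        have he := champ_eval (m₀ + 1) d (by omega)
        rw [← he]
        exact hrun _ (by omega) (by omega)
      have hclash := clash (m₀ + 1 + 1) t s ht1 (by omega) hdvd (by omega) htop
      have hj : j = t + s := by omega
      have hm2n : m₀ + 1 + 1 ≤ n := by have := le_pre (m₀ + 1); omega
      calc j = t + s := hj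
        _ ≤ Nat.size (m₀ + 1 + 1) := hclash
        _ ≤ Nat.size n := Nat.size_le_size hm2n
    · -- block m₀+1 is fully covered, and run extends into block m₀
      exfalso
      push_neg at hB
      have hm₀ : 1 ≤ m₀ := by
        by_contra hc
        have : m₀ = 0 := by omega
        rw [this, pre_zero] at hB; omega
      obtain ⟨m₁, rfl⟩ : ∃ m₁, m₀ = m₁ + 1 := ⟨m₀ - 1, by omega⟩
      have hszp := size_pos' (m₁ + 1)
      have hall : ∀ d < Nat.size (m₁ + 1 + 1), Nat.testBit (m₁ + 1 + 1) d = true := by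
        intro d hd
        have hoff : Nat.size (m₁ + 1 + 1) - 1 - d < Nat.size (m₁ + 1 + 1) := by omega
        have he := champ_eval (m₁ + 1) (Nat.size (m₁ + 1 + 1) - 1 - d) hoff
        have hidx : Nat.size (m₁ + 1 + 1) - 1 - (Nat.size (m₁ + 1 + 1) - 1 - d) = d := by omega
        rw [hidx] at he
        rw [← he]
        refine hrun _ (by omega) (by omega)
      have hone := all_ones (m₁ + 1 + 1) hall
      have hsz2 : 2 ≤ Nat.size (m₁ + 1 + 1) := by
        by_contra hc
        have h1 : Nat.size (m₁ + 1 + 1) ≤ 1 := by omega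
        have h2 : 2 ^ Nat.size (m₁ + 1 + 1) ≤ 2 ^ 1 :=
          Nat.pow_le_pow_right (by norm_num) h1
        omega
      -- last digit of block m₁+1 is bit 0 of m₁+1, which is in the run, hence true
      have hps1 := pre_succ m₁
      have hszp1 := size_pos' m₁
      have he0 := champ_eval m₁ (Nat.size (m₁ + 1) - 1) (by omega)
      have hq0 : pre m₁ + (Nat.size (m₁ + 1) - 1) + 1 = pre (m₁ + 1) := by omega
      have hidx0 : Nat.size (m₁ + 1) - 1 - (Nat.size (m₁ + 1) - 1) = 0 := by omega
      rw [hq0, hidx0] at he0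
      have htrue : Nat.testBit (m₁ + 1) 0 = true := by
        rw [← he0]
        exact hrun _ (by omega) (by omega)
      -- but m₁+1 = 2^sz - 2 is even
      have h4 : 2 ^ Nat.size (m₁ + 1 + 1) = 4 * 2 ^ (Nat.size (m₁ + 1 + 1) - 2) := by
        conv_lhs => rw [show Nat.size (m₁ + 1 + 1) = (Nat.size (m₁ + 1 + 1) - 2) + 2 from by omega]
        ring
      rw [Nat.testBit_zero] at htrue
      simp only [decide_eq_true_eq] at htrue
      omega

/-- Upper bound -/
lemma runL_upper (n : ℕ) : runL champ n ≤ Nat.size n := by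
  classical
  unfold runL
  have hP0 : (fun j => ∃ i, i + j ≤ n ∧ ∀ k, 1 ≤ k → k ≤ j → champ (i + k) = true) 0 :=
    ⟨0, by omega, fun k hk1 hk2 => by omega⟩
  have := Nat.findGreatest_spec (P := fun j => ∃ i, i + j ≤ n ∧
      ∀ k, 1 ≤ k → k ≤ j → champ (i + k) = true) (Nat.zero_le n) hP0
  obtain ⟨i, hij, h⟩ := this
  exact run_le n i _ hij h


/-- chosen run length for the lower bound -/
def f (n : ℕ) : ℕ := Nat.log 2 n - (Nat.log 2 (Nat.log 2 n) + 3)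

lemma k_bound : ∀ k, 3 ≤ k → k + 4 ≤ 2 ^ k := by
  intro k hk
  induction k with
  | zero => omega
  | succ k ih =>
    rcases Nat.lt_or_ge k 3 with h | h
    · interval_cases k <;> simp_all <;> omega
    · have := ih h
      have : 1 ≤ 2 ^ k := Nat.one_le_two_pow
      rw [pow_succ]; omega

lemma f_facts (n : ℕ) (hn : 256 ≤ n) :
    Nat.log 2 (Nat.log 2 n) + 4 ≤ Nat.log 2 n ∧ 1 ≤ f n ∧ f n * 2 ^ f n ≤ n := by
  have hL8 : 8 ≤ Nat.log 2 n := by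
    have h1 : Nat.log 2 256 ≤ Nat.log 2 n := Nat.log_mono_right hn
    have h2 : Nat.log 2 256 = 8 := by
      rw [show (256 : ℕ) = 2 ^ 8 by norm_num, Nat.log_pow (by norm_num)]
    omega
  have hk3 : 3 ≤ Nat.log 2 (Nat.log 2 n) := by
    have h1 : Nat.log 2 8 ≤ Nat.log 2 (Nat.log 2 n) := Nat.log_mono_right hL8
    have h2 : Nat.log 2 8 = 3 := by
      rw [show (8 : ℕ) = 2 ^ 3 by norm_num, Nat.log_pow (by norm_num)]
    omega
  have hkL : Nat.log 2 (Nat.log 2 n) + 4 ≤ Nat.log 2 n :=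
    le_trans (k_bound _ hk3) (Nat.pow_log_le_self 2 (by omega))
  refine ⟨hkL, by unfold f; omega, ?_⟩
  have hfk : f n + (Nat.log 2 (Nat.log 2 n) + 1) ≤ Nat.log 2 n := by unfold f; omega
  have h2L : 2 ^ Nat.log 2 n ≤ n := Nat.pow_log_le_self 2 (by omega)
  have hLk : Nat.log 2 n < 2 ^ (Nat.log 2 (Nat.log 2 n) + 1) :=
    Nat.lt_pow_succ_log_self (by norm_num) _
  have hfL : f n ≤ Nat.log 2 n := by unfold f; omega
  calc f n * 2 ^ f n ≤ Nat.log 2 n * 2 ^ f n := Nat.mul_le_mul_right _ hfL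
    _ ≤ 2 ^ (Nat.log 2 (Nat.log 2 n) + 1) * 2 ^ f n := Nat.mul_le_mul_right _ (by omega)
    _ = 2 ^ (f n + (Nat.log 2 (Nat.log 2 n) + 1)) := by rw [← pow_add, Nat.add_comm]
    _ ≤ 2 ^ Nat.log 2 n := Nat.pow_le_pow_right (by norm_num) hfk
    _ ≤ n := h2L


end ChampAux

open ChampAux

/-- The binary Champernowne sequence is typical: `L_n(c)/log₂ n → 1`. -/
theorem champ_typical : Typical champ := by
  unfold Typical
  have A : Tendsto (fun n : ℕ => Real.logb 2 (n : ℝ)) atTop atTop :=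
    (Real.tendsto_logb_atTop one_lt_two).comp tendsto_natCast_atTop_atTop
  have hinv : Tendsto (fun n : ℕ => (Real.logb 2 (n : ℝ))⁻¹) atTop (nhds 0) := by
    have := A.inv_tendsto_atTop
    simpa [Pi.inv_def] using this
  have hlog2pos : (0:ℝ) < Real.log 2 := Real.log_pos one_lt_two
  have hloglog : Tendsto (fun n : ℕ =>
      Real.logb 2 (Real.logb 2 (n : ℝ)) / Real.logb 2 (n : ℝ)) atTop (nhds 0) := by
    have h1 : Tendsto (fun u : ℝ => Real.log u / u) atTop (nhds 0) := by
      simpa using Real.isLittleO_log_id_atTop.tendsto_div_nhds_zero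
    have h2 : Tendsto (fun u : ℝ => Real.logb 2 u / u) atTop (nhds 0) := by
      have : (fun u : ℝ => Real.logb 2 u / u) =
          fun u : ℝ => (Real.log u / u) * (Real.log 2)⁻¹ := by
        funext u; rw [Real.logb]; ring
      rw [this]
      simpa using h1.mul_const (Real.log 2)⁻¹
    exact h2.comp A
  set G : ℕ → ℝ := fun n =>
    1 - (Real.logb 2 (Real.logb 2 (n : ℝ)) / Real.logb 2 (n : ℝ)
      + 5 * (Real.logb 2 (n : ℝ))⁻¹) with hGdef
  set H : ℕ → ℝ := fun n => 1 + 2 * (Real.logb 2 (n : ℝ))⁻¹ with hHdef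
  have hG : Tendsto G atTop (nhds 1) := by
    have : Tendsto (fun n : ℕ => Real.logb 2 (Real.logb 2 (n : ℝ)) / Real.logb 2 (n : ℝ)
        + 5 * (Real.logb 2 (n : ℝ))⁻¹) atTop (nhds 0) := by
      simpa using hloglog.add (hinv.const_mul 5)
    simpa using (tendsto_const_nhds (x := (1:ℝ)) (f := atTop)).sub this
  have hH : Tendsto H atTop (nhds 1) := by
    simpa using (tendsto_const_nhds (x := (1:ℝ)) (f := atTop)).add (hinv.const_mul 2)
  refine tendsto_of_tendsto_of_tendsto_of_le_of_le' hG hH ?_ ?_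
  · -- lower bound, eventually
    filter_upwards [eventually_ge_atTop 256] with n hn
    have hn2 : (2:ℕ) ≤ n := by omega
    have hnR : (2:ℝ) ≤ (n:ℝ) := by exact_mod_cast hn2
    have hlbpos : 0 < Real.logb 2 (n : ℝ) :=
      Real.logb_pos one_lt_two (by linarith)
    obtain ⟨hkL, hf1, hfmul⟩ := f_facts n hn
    have hrun : f n ≤ runL champ n := runL_lower (f n) n hf1 hfmul
    have hLpos : 0 < Nat.log 2 n := by omega
    have hcast : (f n : ℝ) = (Nat.log 2 n : ℝ) - (Nat.log 2 (Nat.log 2 n) : ℝ) - 3 := by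
      have h0 : f n = Nat.log 2 n - (Nat.log 2 (Nat.log 2 n) + 3) := rfl
      rw [h0]
      push_cast [Nat.cast_sub (by omega : Nat.log 2 (Nat.log 2 n) + 3 ≤ Nat.log 2 n)]
      ring
    have hLlb : Real.logb 2 (n : ℝ) - 1 ≤ (Nat.log 2 n : ℝ) := by
      have h1 : n < 2 ^ (Nat.log 2 n + 1) := Nat.lt_pow_succ_log_self (by norm_num) n
      have h2 : (n : ℝ) ≤ (2:ℝ) ^ (Nat.log 2 n + 1) := by
        have : (n:ℝ) < ((2:ℕ) ^ (Nat.log 2 n + 1) : ℕ) := by exact_mod_cast h1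
        push_cast at this
        linarith
      have h3 : Real.logb 2 (n : ℝ) ≤ Real.logb 2 ((2:ℝ) ^ (Nat.log 2 n + 1)) :=
        (Real.logb_le_logb one_lt_two (by linarith) (by positivity)).mpr h2
      rw [Real.logb_pow, Real.logb_self_eq_one one_lt_two] at h3
      push_cast at h3
      linarith
    have hLub : (Nat.log 2 n : ℝ) ≤ Real.logb 2 (n : ℝ) := by
      have := Real.natLog_le_logb n 2
      simpa using this
    have hkub : (Nat.log 2 (Nat.log 2 n) : ℝ) ≤ Real.logb 2 (Real.logb 2 (n : ℝ)) := by
      have h1 : (Nat.log 2 (Nat.log 2 n) : ℝ) ≤ Real.logb 2 (Nat.log 2 n : ℝ) := by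
        have := Real.natLog_le_logb (Nat.log 2 n) 2
        simpa using this
      have h2 : Real.logb 2 (Nat.log 2 n : ℝ) ≤ Real.logb 2 (Real.logb 2 (n : ℝ)) :=
        (Real.logb_le_logb one_lt_two (by exact_mod_cast hLpos) hlbpos).mpr hLub
      linarith
    have hfR : Real.logb 2 (n : ℝ) - Real.logb 2 (Real.logb 2 (n : ℝ)) - 5 ≤ (f n : ℝ) := by
      rw [hcast]; linarith
    have hrunR : (f n : ℝ) ≤ (runL champ n : ℝ) := by exact_mod_cast hrun
    have hGn : G n = (Real.logb 2 (n : ℝ) - (Real.logb 2 (Real.logb 2 (n : ℝ)) + 5))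
        / Real.logb 2 (n : ℝ) := by
      rw [hGdef]
      have hne : Real.logb 2 (n : ℝ) ≠ 0 := ne_of_gt hlbpos
      field_simp
    rw [hGn]
    have hnum : Real.logb 2 (n : ℝ) - (Real.logb 2 (Real.logb 2 (n : ℝ)) + 5)
        ≤ (runL champ n : ℝ) := by linarith
    exact div_le_div_of_nonneg_right hnum hlbpos.le
  · -- upper bound, eventually
    filter_upwards [eventually_ge_atTop 2] with n hn
    have hnR : (2:ℝ) ≤ (n:ℝ) := by exact_mod_cast hn
    have hlbpos : 0 < Real.logb 2 (n : ℝ) :=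
      Real.logb_pos one_lt_two (by linarith)
    have hrun : runL champ n ≤ Nat.size n := runL_upper n
    have hszpos : 1 ≤ Nat.size n := Nat.size_pos.mpr (by omega)
    have hsz : (2:ℕ) ^ (Nat.size n - 1) ≤ n := Nat.lt_size.mp (by omega)
    have hszR : (Nat.size n : ℝ) ≤ Real.logb 2 (n : ℝ) + 1 := by
      have h2 : ((2:ℝ)) ^ (Nat.size n - 1) ≤ (n : ℝ) := by exact_mod_cast hsz
      have h3 : Real.logb 2 ((2:ℝ) ^ (Nat.size n - 1)) ≤ Real.logb 2 (n : ℝ) :=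
        (Real.logb_le_logb one_lt_two (by positivity) (by linarith)).mpr h2
      rw [Real.logb_pow, Real.logb_self_eq_one one_lt_two] at h3
      have h4 : ((Nat.size n - 1 : ℕ) : ℝ) = (Nat.size n : ℝ) - 1 := by
        push_cast [Nat.cast_sub hszpos]; ring
      rw [h4] at h3
      simp at h3
      linarith
    have hHn : H n = (Real.logb 2 (n : ℝ) + 2) / Real.logb 2 (n : ℝ) := by
      rw [hHdef]
      have hne : Real.logb 2 (n : ℝ) ≠ 0 := ne_of_gt hlbpos
      field_simp
    rw [hHn]
    have hnum : (runL champ n : ℝ) ≤ Real.logb 2 (n : ℝ) + 2 := by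
      have : (runL champ n : ℝ) ≤ (Nat.size n : ℝ) := by exact_mod_cast hrun
      linarith
    exact div_le_div_of_nonneg_right hnum hlbpos.le
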